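/- Let M be a pointed metric space. The space Lip_0(M) has the w*-D2P if and only if M has the Lip-LTP. -/

import Mathlib

open scoped ENNReal

/-- The set `M̃ = {(x,y) : x ≠ y}` as a subtype. -/
def Mt (M : Type*) : Type _ := {p : M × M // p.1 ≠ p.2}

variable {M : Type*} [MetricSpace M]

/-- `ℓ∞(M̃)`. -/
noncomputable abbrev ellInfty (M : Type*) : Type _ := ↥(lp (fun _ : Mt M => ℝ) ∞)

/-- A bounded linear functional on `ℓ∞(M̃)` is positive if it is nonnegative on
nonnegative functions. -/
def IsPositive {M : Type*} (Λ : ellInfty M →L[ℝ] ℝ) : Prop :=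
  ∀ h : ellInfty M, (∀ p : Mt M, 0 ≤ h p) → 0 ≤ Λ h

/-- The indicator function of `A ⊆ M̃` as an element of `ℓ∞(M̃)`. -/
noncomputable def indicLp {M : Type*} (A : Set (Mt M)) : ellInfty M :=
  ⟨A.indicator 1, memℓp_infty (by
    refine ⟨1, ?_⟩
    rintro r ⟨p, rfl⟩
    by_cases hp : p ∈ A <;>
      simp [Set.indicator_apply, hp])⟩

/-- The image of `Lip₀(M)` in `ℓ∞(M̃)` under the de Leeuw embedding `Φ`;
`Lip₀(M)` itself is identified with this submodule, carrying the induced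
(Lipschitz) norm, and `Φ` is then the inclusion `(LipO M base).subtypeL`. -/
noncomputable def LipO (M : Type*) [MetricSpace M] (base : M) :
    Submodule ℝ (ellInfty M) where
  carrier := {g | ∃ f : M → ℝ, f base = 0 ∧
    ∀ p : Mt M, g p = (f p.1.1 - f p.1.2) / dist p.1.1 p.1.2}
  add_mem' := by
    rintro g₁ g₂ ⟨f₁, hf₁, h₁⟩ ⟨f₂, hf₂, h₂⟩
    refine ⟨f₁ + f₂, by simp [hf₁, hf₂], fun p => ?_⟩
    have : (⇑(g₁ + g₂) : Mt M → ℝ) = ⇑g₁ + ⇑g₂ := lp.coeFn_add g₁ g₂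
    rw [this]
    simp only [Pi.add_apply, h₁ p, h₂ p]
    ring
  zero_mem' := by
    refine ⟨0, rfl, fun p => ?_⟩
    have : (⇑(0 : ellInfty M) : Mt M → ℝ) = 0 := lp.coeFn_zero _ _
    simp [this]
  smul_mem' := by
    rintro c g ⟨f, hf, h⟩
    refine ⟨c • f, by simp [hf], fun p => ?_⟩
    have : (⇑(c • g) : Mt M → ℝ) = c • ⇑g := lp.coeFn_smul c g
    rw [this]
    simp only [Pi.smul_apply, smul_eq_mul, h p]
    ring

open Classical in
/-- Evaluation of (the function represented by) `g ∈ Lip₀(M)` at `x`. -/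
noncomputable def evalAux (base x : M) (g : ↥(LipO M base)) : ℝ :=
  if h : x = base then 0
  else ((g : ellInfty M) : Mt M → ℝ) ⟨(x, base), h⟩ * dist x base

/-- The evaluation functional `δ_x : Lip₀(M) → ℝ`, `δ_x(f) = f(x)`
(recovering `f` from its de Leeuw transform). -/
noncomputable def deltaF (base x : M) : ↥(LipO M base) →L[ℝ] ℝ :=
  LinearMap.mkContinuous
    { toFun := evalAux base x
      map_add' := fun g₁ g₂ => by
        unfold evalAux
        split_ifs with h
        · simp
        · simp only [Submodule.coe_add, lp.coeFn_add, Pi.add_apply]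
          erw [Pi.add_apply]
          ring
      map_smul' := fun c g => by
        unfold evalAux
        split_ifs with h
        · simp
        · simp only [Submodule.coe_smul, lp.coeFn_smul, Pi.smul_apply,
            smul_eq_mul, RingHom.id_apply]
          erw [Pi.smul_apply, smul_eq_mul]
          ring }
    (dist x base)
    (by
      intro g
      simp only [LinearMap.coe_mk, AddHom.coe_mk]
      unfold evalAux
      split_ifs with h
      · subst h
        rw [norm_zero, dist_self, zero_mul]
      · have h1 : ‖((g : ellInfty M) : Mt M → ℝ) ⟨(x, base), h⟩‖ ≤ ‖(g : ellInfty M)‖ :=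
          lp.norm_apply_le_norm ENNReal.top_ne_zero (g : ellInfty M) ⟨(x, base), h⟩
        have h2 : ‖(g : ellInfty M)‖ = ‖g‖ := rfl
        calc ‖((g : ellInfty M) : Mt M → ℝ) ⟨(x, base), h⟩ * dist x base‖
            = ‖((g : ellInfty M) : Mt M → ℝ) ⟨(x, base), h⟩‖ * dist x base := by
              rw [norm_mul, Real.norm_eq_abs (dist x base), abs_of_nonneg dist_nonneg]
          _ ≤ ‖g‖ * dist x base := by
              exact mul_le_mul_of_nonneg_right (h2 ▸ h1) dist_nonneg
          _ = dist x base * ‖g‖ := mul_comm _ _)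

/-- The Lipschitz-free space `F(M)`: the closed linear span of the evaluation
functionals inside the dual of `Lip₀(M)`. -/
noncomputable def FreeSpan (M : Type*) [MetricSpace M] (base : M) :
    Submodule ℝ (↥(LipO M base) →L[ℝ] ℝ) :=
  Submodule.span ℝ (Set.range (deltaF base))

/-- The Lipschitz-free space `F(M)`: the closed linear span of the evaluation
functionals inside the dual of `Lip₀(M)`. -/
noncomputable def FreeSp (M : Type*) [MetricSpace M] (base : M) :
    Set (↥(LipO M base) →L[ℝ] ℝ) :=
  closure (FreeSpan M base : Set (↥(LipO M base) →L[ℝ] ℝ))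

/-- The weak-star topology `σ(Lip₀(M), F(M))` on `Lip₀(M)`. -/
noncomputable def wstar (M : Type*) [MetricSpace M] (base : M) :
    TopologicalSpace ↥(LipO M base) :=
  TopologicalSpace.induced
    (fun g => fun μ : FreeSp M base => (μ : ↥(LipO M base) →L[ℝ] ℝ) g)
    inferInstance

variable {M : Type*} [MetricSpace M]

/-- The de Leeuw quotient `f(m_{x,y}) = (f x - f y)/d(x,y)`. -/
noncomputable def mQ (f : M → ℝ) (p : Mt M) : ℝ :=
  (f p.1.1 - f p.1.2) / dist p.1.1 p.1.2

/-- `A ⊆ M̃` is `γ`-cyclically monotonic. -/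
def GammaCM (γ : ℝ) (A : Set (Mt M)) : Prop :=
  ∀ (n : ℕ) (p : Fin (n + 1) → Mt M), (∀ i, p i ∈ A) →
    0 ≤ ∑ i : Fin (n + 1),
      min (dist (p i).1.1 (p (i + 1)).1.2 - γ * dist (p i).1.1 (p i).1.2)
          (dist (p i).1.2 (p (i + 1)).1.2)

/-- `A ⊆ M̃` is cyclically monotonic. -/
def CyclMono (A : Set (Mt M)) : Prop :=
  ∀ (n : ℕ) (p : Fin (n + 1) → Mt M), (∀ i, p i ∈ A) →
    ∑ i : Fin (n + 1), dist (p i).1.1 (p i).1.2 ≤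
      ∑ i : Fin (n + 1), dist (p i).1.1 (p (i + 1)).1.2

/-- `π(A)`. -/
def piA (A : Set (Mt M)) : Set M := {z | ∃ p ∈ A, p.1.1 = z ∨ p.1.2 = z}

/-- The pair `(u,v)` as an element of `M̃`. -/
def pr {M : Type*} (u v : M) (h : u ≠ v) : Mt M := ⟨(u, v), h⟩

/-- `Lip₀(M)` has the weak-star diameter 2 property: every nonempty relatively
weak-star open subset of the closed unit ball has diameter 2. -/
def WstarD2P (M : Type*) [MetricSpace M] (base : M) : Prop :=
  ∀ U : Set ↥(LipO M base), U.Nonempty →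
    (∃ V : Set ↥(LipO M base), @IsOpen _ (wstar M base) V ∧
      U = V ∩ {g : ↥(LipO M base) | ‖g‖ ≤ 1}) →
    Metric.diam U = 2

/-- `M` has the Lip-LTP. -/
def LipLTP (M : Type*) [MetricSpace M] (base : M) : Prop :=
  ∀ N : Finset M, ∀ ε : ℝ, 0 < ε → ∀ f : M → ℝ, f base = 0 → LipschitzWith 1 f →
    ∃ u v : M, u ≠ v ∧ ∀ x ∈ N, ∀ y ∈ N,
      (1 - ε) * (|f x - f y| + dist u v) ≤ dist x u + dist y v

set_option maxHeartbeats 2000000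
set_option synthInstance.maxHeartbeats 2000000
noncomputable instance instLipONACG {M : Type*} [MetricSpace M] (base : M) :
    NormedAddCommGroup ↥(LipO M base) := inferInstance
noncomputable instance instLipONSpace {M : Type*} [MetricSpace M] (base : M) :
    NormedSpace ℝ ↥(LipO M base) := inferInstance
noncomputable instance instDualNACG {M : Type*} [MetricSpace M] (base : M) :
    NormedAddCommGroup (↥(LipO M base) →L[ℝ] ℝ) := inferInstance
noncomputable instance instDualNSpace {M : Type*} [MetricSpace M] (base : M) :
    NormedSpace ℝ (↥(LipO M base) →L[ℝ] ℝ) := inferInstance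

namespace Stmt11Aux

variable {M : Type*} [MetricSpace M] (base : M)

/-- Coordinate of an element of `LipO` in `ℓ∞(M̃)`. -/
noncomputable def coord (g : ↥(LipO M base)) (p : Mt M) : ℝ :=
  ((g : ellInfty M) : Mt M → ℝ) p

lemma abs_coord_le (g : ↥(LipO M base)) (p : Mt M) : |coord base g p| ≤ ‖g‖ := by
  have h1 := lp.norm_apply_le_norm ENNReal.top_ne_zero (g : ellInfty M) p
  rw [Real.norm_eq_abs] at h1
  exact h1

lemma rep_spec (g : ↥(LipO M base)) : ∃ f : M → ℝ, f base = 0 ∧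
    ∀ p : Mt M, coord base g p = (f p.1.1 - f p.1.2) / dist p.1.1 p.1.2 := g.2

lemma deltaF_eq (g : ↥(LipO M base)) (f : M → ℝ) (hf0 : f base = 0)
    (hrep : ∀ p : Mt M, coord base g p = (f p.1.1 - f p.1.2) / dist p.1.1 p.1.2)
    (x : M) : deltaF base x g = f x := by
  show evalAux base x g = f x
  unfold evalAux
  split_ifs with h
  · rw [h, hf0]
  · have := hrep ⟨(x, base), h⟩
    rw [show ((g : ellInfty M) : Mt M → ℝ) ⟨(x, base), h⟩ = coord base g ⟨(x, base), h⟩ from rfl,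
      this]
    have hd : dist x base ≠ 0 := dist_ne_zero.2 h
    field_simp [hf0]
    rw [hf0, sub_zero]

lemma rep_lip (g : ↥(LipO M base)) (f : M → ℝ)
    (hrep : ∀ p : Mt M, coord base g p = (f p.1.1 - f p.1.2) / dist p.1.1 p.1.2)
    (a b : M) : |f a - f b| ≤ ‖g‖ * dist a b := by
  rcases eq_or_ne a b with rfl | h
  · rw [sub_self, abs_zero, dist_self, mul_zero]
  · have h1 := abs_coord_le base g ⟨(a, b), h⟩
    rw [hrep ⟨(a, b), h⟩] at h1
    have hd : (0:ℝ) < dist a b := dist_pos.2 h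
    rw [abs_div, abs_of_pos hd, div_le_iff₀ hd] at h1
    calc |f a - f b| ≤ ‖g‖ * dist a b := h1
    
/-- Build an element of `LipO` from a function. -/
noncomputable def toLipO (f : M → ℝ) (hf0 : f base = 0) (C : ℝ)
    (hC : ∀ a b : M, |f a - f b| ≤ C * dist a b) : ↥(LipO M base) :=
  ⟨⟨fun p : Mt M => (f p.1.1 - f p.1.2) / dist p.1.1 p.1.2, memℓp_infty (by
      refine ⟨C, ?_⟩
      rintro r ⟨p, rfl⟩
      have hd : (0:ℝ) < dist p.1.1 p.1.2 := dist_pos.2 p.2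
      simp only [Real.norm_eq_abs, abs_div, abs_of_pos hd]
      rw [div_le_iff₀ hd]
      exact hC _ _)⟩, ⟨f, hf0, fun p => rfl⟩⟩

lemma coord_toLipO (f : M → ℝ) (hf0 : f base = 0) (C : ℝ)
    (hC : ∀ a b : M, |f a - f b| ≤ C * dist a b) (p : Mt M) :
    coord base (toLipO base f hf0 C hC) p = (f p.1.1 - f p.1.2) / dist p.1.1 p.1.2 := by
  rfl

lemma deltaF_toLipO (f : M → ℝ) (hf0 : f base = 0) (C : ℝ)
    (hC : ∀ a b : M, |f a - f b| ≤ C * dist a b) (x : M) :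
    deltaF base x (toLipO base f hf0 C hC) = f x :=
  deltaF_eq base _ f hf0 (coord_toLipO base f hf0 C hC) x

lemma norm_le_of_coord (g : ↥(LipO M base)) (C : ℝ) (hC0 : 0 ≤ C)
    (h : ∀ p : Mt M, |coord base g p| ≤ C) : ‖g‖ ≤ C := by
  have : ‖(g : ellInfty M)‖ ≤ C :=
    lp.norm_le_of_forall_le hC0 (fun p => by rw [Real.norm_eq_abs]; exact h p)
  exact this

lemma norm_toLipO_le (f : M → ℝ) (hf0 : f base = 0) (C : ℝ) (hC0 : 0 ≤ C)
    (hC : ∀ a b : M, |f a - f b| ≤ C * dist a b) :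
    ‖toLipO base f hf0 C hC‖ ≤ C := by
  refine norm_le_of_coord base _ C hC0 (fun p => ?_)
  rw [coord_toLipO]
  have hd : (0:ℝ) < dist p.1.1 p.1.2 := dist_pos.2 p.2
  rw [abs_div, abs_of_pos hd, div_le_iff₀ hd]
  exact hC _ _

lemma coord_sub (g g' : ↥(LipO M base)) (p : Mt M) :
    coord base (g - g') p = coord base g p - coord base g' p := by
  show ((((g - g') : ↥(LipO M base)) : ellInfty M) : Mt M → ℝ) p = _
  rw [show (((g - g') : ↥(LipO M base)) : ellInfty M) = (g : ellInfty M) - (g' : ellInfty M) from rfl,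
    lp.coeFn_sub]
  rfl

end Stmt11Aux

namespace Stmt11Aux

variable {M : Type*} [MetricSpace M]

/-- Key construction: from the trapezoid inequality produce a 1-Lipschitz function
agreeing with `(1-ε')h` on `N'` and with slope at least `1-ε'` from `u` to `v`. -/
lemma exists_fn (N' : Finset M) (hne : N'.Nonempty) (h : M → ℝ)
    (hLip : ∀ a b : M, |h a - h b| ≤ dist a b) (ε' : ℝ) (hε0 : 0 ≤ ε') (hε1 : ε' ≤ 1)
    (u v : M)
    (hT : ∀ x ∈ N', ∀ y ∈ N', (1 - ε') * (|h x - h y| + dist u v) ≤ dist x u + dist y v) :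
    ∃ F : M → ℝ, (∀ a b : M, |F a - F b| ≤ dist a b) ∧
      (∀ y ∈ N', F y = (1 - ε') * h y) ∧ (1 - ε') * dist u v ≤ F u - F v := by
  have h1ε : 0 ≤ 1 - ε' := by linarith
  set c : ℝ := N'.inf' hne (fun y => (1 - ε') * h y + dist y u) with hc
  have hc_le : ∀ y ∈ N', c ≤ (1 - ε') * h y + dist y u := fun y hy => Finset.inf'_le _ hy
  have hkey : ∀ x ∈ N', (1 - ε') * h x + (1 - ε') * dist u v - dist x v ≤ c := by
    intro x hx
    refine Finset.le_inf' hne _ (fun y hy => ?_)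
    have ht := hT y hy x hx
    have habs : (1 - ε') * (h x - h y) ≤ (1 - ε') * |h y - h x| := by
      have : h x - h y ≤ |h y - h x| := by
        rw [abs_sub_comm]; exact le_abs_self _
      exact mul_le_mul_of_nonneg_left this h1ε
    nlinarith [ht, habs]
  set F : M → ℝ := fun t =>
    max (N'.sup' hne (fun x => (1 - ε') * h x - dist x t)) (c - dist t u) with hF
  have hFlip1 : ∀ a b : M, F a ≤ F b + dist a b := by
    intro a b
    refine max_le ?_ ?_
    · refine le_trans (Finset.sup'_le hne _ (fun x hx => ?_))
        (add_le_add_left (le_max_left _ _) _)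
      have h4 : (1 - ε') * h x - dist x a ≤ ((1 - ε') * h x - dist x b) + dist a b := by
        linarith [dist_triangle x a b]
      exact le_trans h4
        (add_le_add_left (Finset.le_sup' (fun x => (1 - ε') * h x - dist x b) hx) _)
    · have : c - dist a u ≤ (c - dist b u) + dist a b := by
        have := dist_triangle b a u
        have := dist_comm b a
        have h3 := dist_triangle b a u
        nlinarith [dist_triangle b a u, dist_comm a b, dist_comm b a]
      exact le_trans this (add_le_add_left (le_max_right _ _) _)
  have hFlip : ∀ a b : M, |F a - F b| ≤ dist a b := by
    intro a b
    rw [abs_sub_le_iff]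
    constructor
    · linarith [hFlip1 a b]
    · have := hFlip1 b a
      rw [dist_comm b a] at this
      linarith
  have hFval : ∀ y ∈ N', F y = (1 - ε') * h y := by
    intro y hy
    refine le_antisymm (max_le (Finset.sup'_le hne _ (fun x hx => ?_)) ?_) ?_
    · have : (1 - ε') * (h x - h y) ≤ dist x y := by
        calc (1 - ε') * (h x - h y) ≤ (1 - ε') * |h x - h y| :=
              mul_le_mul_of_nonneg_left (le_abs_self _) h1ε
          _ ≤ 1 * |h x - h y| := mul_le_mul_of_nonneg_right (by linarith) (abs_nonneg _)
          _ = |h x - h y| := one_mul _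
          _ ≤ dist x y := hLip x y
      linarith
    · linarith [hc_le y hy]
    · have : (1 - ε') * h y - dist y y ≤ N'.sup' hne (fun x => (1 - ε') * h x - dist x y) :=
        Finset.le_sup' (fun x => (1 - ε') * h x - dist x y) hy
      rw [dist_self] at this
      calc (1 - ε') * h y = (1 - ε') * h y - 0 := by ring
        _ ≤ _ := le_trans (by linarith) (le_max_left _ _)
  have hFu : c ≤ F u := by
    have : c - dist u u ≤ F u := le_max_right _ _
    rwa [dist_self, sub_zero] at this
  have hFv : F v ≤ c - (1 - ε') * dist u v := by
    refine max_le (Finset.sup'_le hne _ (fun x hx => ?_)) ?_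
    · linarith [hkey x hx]
    · have : (1 - ε') * dist u v ≤ dist u v := by
        nlinarith [dist_nonneg (x := u) (y := v)]
      have hvu : dist v u = dist u v := dist_comm v u
      linarith
  exact ⟨F, hFlip, hFval, by linarith⟩

end Stmt11Aux

namespace Stmt11Aux

variable {M : Type*} [MetricSpace M]

lemma nu_apply (base : M) (cf : M →₀ ℝ) (g : ↥(LipO M base)) :
    (cf.sum fun x t => t • deltaF base x) g =
      ∑ x ∈ cf.support, cf x * deltaF base x g := by
  rw [Finsupp.sum, ContinuousLinearMap.sum_apply]
  exact Finset.sum_congr rfl (fun x _ => by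
    rw [ContinuousLinearMap.smul_apply, smul_eq_mul])

lemma approx_delta (base : M) (b : ↥(LipO M base) →L[ℝ] ℝ) (hb : b ∈ FreeSp M base)
    (η : ℝ) (hη : 0 < η) :
    ∃ cf : M →₀ ℝ, dist b (cf.sum fun x t => t • deltaF base x) < η := by
  have hb2 : b ∈ closure ((FreeSpan M base : Set (↥(LipO M base) →L[ℝ] ℝ))) := hb
  rw [Metric.mem_closure_iff] at hb2
  obtain ⟨b', hb', hdb⟩ := hb2 η hη
  have hb'' : b' ∈ Submodule.span ℝ (Set.range (deltaF base)) := hb'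
  rw [Finsupp.mem_span_range_iff_exists_finsupp] at hb''
  obtain ⟨cf, hcf⟩ := hb''
  exact ⟨cf, by rwa [hcf]⟩

lemma est (base : M) (h₀ : M → ℝ) (h₀0 : h₀ base = 0)
    (hLip0 : ∀ a b : M, |h₀ a - h₀ b| ≤ dist a b)
    (f₀ g : ↥(LipO M base)) (hδf₀ : ∀ x : M, deltaF base x f₀ = h₀ x)
    (hf₀B : ‖f₀‖ ≤ 1) (hgn : ‖g‖ ≤ 1)
    (ε' δ : ℝ) (hε'0 : 0 < ε') (hδ0 : 0 < δ)
    (cf : M →₀ ℝ)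
    (hgval : ∀ x ∈ cf.support, deltaF base x g = (1 - ε') * h₀ x)
    (hKb : ε' * ∑ x ∈ cf.support, |cf x| * dist x base ≤ δ / 2)
    (μ : ↥(LipO M base) →L[ℝ] ℝ)
    (hμν : ‖μ - cf.sum (fun x t => t • deltaF base x)‖ < δ / 8) :
    dist (μ g) (μ f₀) < δ := by
  set ν : ↥(LipO M base) →L[ℝ] ℝ := cf.sum (fun x t => t • deltaF base x) with hν
  have hterm1 : |μ g - ν g| ≤ δ / 8 * 1 := by
    have h1 : |(μ - ν) g| ≤ ‖μ - ν‖ * ‖g‖ := by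
      have := (μ - ν).le_opNorm g
      rwa [Real.norm_eq_abs] at this
    have h2 : (μ - ν) g = μ g - ν g := rfl
    rw [h2] at h1
    exact h1.trans (mul_le_mul (le_of_lt hμν) hgn (norm_nonneg _) (by positivity))
  have hterm3 : |ν f₀ - μ f₀| ≤ δ / 8 * 1 := by
    have h1 : |(μ - ν) f₀| ≤ ‖μ - ν‖ * ‖f₀‖ := by
      have := (μ - ν).le_opNorm f₀
      rwa [Real.norm_eq_abs] at this
    have h2 : (μ - ν) f₀ = μ f₀ - ν f₀ := rfl
    rw [h2] at h1
    rw [abs_sub_comm]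
    exact h1.trans (mul_le_mul (le_of_lt hμν) hf₀B (norm_nonneg _) (by positivity))
  have hterm2 : |ν g - ν f₀| ≤ δ / 2 := by
    rw [hν, nu_apply, nu_apply, ← Finset.sum_sub_distrib]
    refine (Finset.abs_sum_le_sum_abs _ _).trans ?_
    have hstep : ∀ x ∈ cf.support,
        |cf x * deltaF base x g - cf x * deltaF base x f₀| ≤
          ε' * (|cf x| * dist x base) := by
      intro x hx
      rw [hgval x hx, hδf₀ x]
      have he : (1 - ε') * h₀ x - h₀ x = -(ε' * h₀ x) := by ring
      rw [← mul_sub, he, abs_mul, abs_neg, abs_mul, abs_of_nonneg (le_of_lt hε'0)]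
      have hh₀x : |h₀ x| ≤ dist x base := by
        have := hLip0 x base
        rwa [h₀0, sub_zero] at this
      calc |cf x| * (ε' * |h₀ x|) ≤ |cf x| * (ε' * dist x base) :=
            mul_le_mul_of_nonneg_left
              (mul_le_mul_of_nonneg_left hh₀x (le_of_lt hε'0)) (abs_nonneg _)
        _ = ε' * (|cf x| * dist x base) := by ring
    refine (Finset.sum_le_sum hstep).trans ?_
    rw [← Finset.mul_sum]
    exact hKb
  rw [Real.dist_eq]
  have ht1 : |μ g - μ f₀| ≤ |μ g - ν f₀| + |ν f₀ - μ f₀| := abs_sub_le _ _ _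
  have ht2 : |μ g - ν f₀| ≤ |μ g - ν g| + |ν g - ν f₀| := abs_sub_le _ _ _
  linarith

/-- Build the pair of functions far apart but close to `f₀` on `N'`. -/
lemma build_pair (base : M) (hLTP : LipLTP M base) (N' : Finset M)
    (hbaseN' : base ∈ N') (h₀ : M → ℝ) (h₀0 : h₀ base = 0)
    (hLip0 : ∀ a b : M, |h₀ a - h₀ b| ≤ dist a b)
    (ε' : ℝ) (hε'0 : 0 < ε') (hε'le1 : ε' ≤ 1) :
    ∃ g₁ g₂ : ↥(LipO M base), ‖g₁‖ ≤ 1 ∧ ‖g₂‖ ≤ 1 ∧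
      (∀ x ∈ N', deltaF base x g₁ = (1 - ε') * h₀ x) ∧
      (∀ x ∈ N', deltaF base x g₂ = (1 - ε') * h₀ x) ∧
      2 * (1 - ε') ≤ dist g₁ g₂ := by
  have hLW : LipschitzWith 1 h₀ := by
    refine LipschitzWith.of_dist_le_mul (fun a b => ?_)
    rw [Real.dist_eq]
    simpa using hLip0 a b
  obtain ⟨u, v, huv, hT⟩ := hLTP N' ε' hε'0 h₀ h₀0 hLW
  have hduv : (0:ℝ) < dist u v := dist_pos.2 huv
  obtain ⟨F₁, hF₁lip, hF₁val, hF₁uv⟩ :=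
    exists_fn N' ⟨base, hbaseN'⟩ h₀ hLip0 ε' (le_of_lt hε'0) hε'le1 u v hT
  obtain ⟨G, hGlip, hGval, hGuv⟩ :=
    exists_fn N' ⟨base, hbaseN'⟩ (fun t => -h₀ t)
      (fun a b => by rw [show -h₀ a - -h₀ b = -(h₀ a - h₀ b) by ring, abs_neg]
                     exact hLip0 a b)
      ε' (le_of_lt hε'0) hε'le1 u v
      (by intro x hx y hy
          have := hT x hx y hy
          rwa [show -h₀ x - -h₀ y = -(h₀ x - h₀ y) by ring, abs_neg])
  set F₂ : M → ℝ := fun t => -G t with hF₂def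
  have hF₂lip : ∀ a b : M, |F₂ a - F₂ b| ≤ dist a b := by
    intro a b
    rw [hF₂def]
    rw [show -G a - -G b = -(G a - G b) by ring, abs_neg]
    exact hGlip a b
  have hF₂val : ∀ y ∈ N', F₂ y = (1 - ε') * h₀ y := by
    intro y hy
    rw [hF₂def]
    simp only
    rw [hGval y hy]
    ring
  have hF₂uv : F₂ u - F₂ v ≤ -((1 - ε') * dist u v) := by
    rw [hF₂def]
    simp only
    linarith [hGuv]
  have hF₁base : F₁ base = 0 := by rw [hF₁val base hbaseN', h₀0, mul_zero]
  have hF₂base : F₂ base = 0 := by rw [hF₂val base hbaseN', h₀0, mul_zero]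
  have hF₁lip1 : ∀ a b : M, |F₁ a - F₁ b| ≤ 1 * dist a b := by
    intro a b; rw [one_mul]; exact hF₁lip a b
  have hF₂lip1 : ∀ a b : M, |F₂ a - F₂ b| ≤ 1 * dist a b := by
    intro a b; rw [one_mul]; exact hF₂lip a b
  refine ⟨toLipO base F₁ hF₁base 1 hF₁lip1, toLipO base F₂ hF₂base 1 hF₂lip1,
    norm_toLipO_le base F₁ hF₁base 1 zero_le_one hF₁lip1,
    norm_toLipO_le base F₂ hF₂base 1 zero_le_one hF₂lip1,
    fun x hx => by rw [deltaF_toLipO]; exact hF₁val x hx,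
    fun x hx => by rw [deltaF_toLipO]; exact hF₂val x hx, ?_⟩
  set g₁ := toLipO base F₁ hF₁base 1 hF₁lip1 with hg₁def
  set g₂ := toLipO base F₂ hF₂base 1 hF₂lip1 with hg₂def
  have hco : coord base (g₁ - g₂) ⟨(u, v), huv⟩ =
      (F₁ u - F₁ v) / dist u v - (F₂ u - F₂ v) / dist u v := by
    exact coord_sub base g₁ g₂ _
  have h1 : 2 * (1 - ε') ≤ coord base (g₁ - g₂) ⟨(u, v), huv⟩ := by
    rw [hco, div_sub_div_same, le_div_iff₀ hduv]
    nlinarith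
  have h2 : coord base (g₁ - g₂) ⟨(u, v), huv⟩ ≤ ‖g₁ - g₂‖ :=
    le_trans (le_abs_self _) (abs_coord_le base (g₁ - g₂) _)
  rw [dist_eq_norm]
  linarith

end Stmt11Aux

namespace Stmt11Aux

variable {M : Type*} [MetricSpace M]

lemma ltp_to_d2p (base : M) (hLTP : LipLTP M base) : WstarD2P M base := by
  classical
  intro U hUne hUV
  obtain ⟨V, hVopen, hUeq⟩ := hUV
  have hUsub : U ⊆ {g : ↥(LipO M base) | ‖g‖ ≤ 1} := by
    rw [hUeq]; exact Set.inter_subset_right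
  have hbdd : Bornology.IsBounded U := by
    refine (Metric.isBounded_closedBall (x := (0 : ↥(LipO M base))) (r := 1)).subset ?_
    intro g hg
    have h1 : ‖g‖ ≤ 1 := hUsub hg
    show dist g 0 ≤ 1
    rwa [dist_zero_right]
  have hdle : Metric.diam U ≤ 2 := by
    refine Metric.diam_le_of_forall_dist_le (by norm_num) (fun g hg g' hg' => ?_)
    have h1 : ‖g‖ ≤ 1 := hUsub hg
    have h2 : ‖g'‖ ≤ 1 := hUsub hg'
    calc dist g g' = ‖g - g'‖ := dist_eq_norm g g'
      _ ≤ ‖g‖ + ‖g'‖ := norm_sub_le g g'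
      _ ≤ 2 := by linarith
  have hge : ∀ c : ℝ, 0 < c → 2 - c ≤ Metric.diam U := by
    intro c hc
    obtain ⟨f₀, hf₀U⟩ := hUne
    have hf₀V : f₀ ∈ V := by rw [hUeq] at hf₀U; exact hf₀U.1
    have hf₀B : ‖f₀‖ ≤ 1 := hUsub hf₀U
    obtain ⟨h₀, h₀0, h₀rep⟩ := rep_spec base f₀
    have hLip0 : ∀ a b : M, |h₀ a - h₀ b| ≤ dist a b := by
      intro a b
      refine (rep_lip base f₀ h₀ h₀rep a b).trans ?_
      calc ‖f₀‖ * dist a b ≤ 1 * dist a b :=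
            mul_le_mul_of_nonneg_right hf₀B dist_nonneg
        _ = dist a b := one_mul _
    have hδf₀ : ∀ x : M, deltaF base x f₀ = h₀ x := fun x =>
      deltaF_eq base f₀ h₀ h₀0 h₀rep x
    -- unpack the weak-star open set
    unfold wstar at hVopen
    obtain ⟨W, hWopen, hpre⟩ := isOpen_induced_iff.mp hVopen
    have hf₀W : (fun μ : FreeSp M base => (μ : ↥(LipO M base) →L[ℝ] ℝ) f₀) ∈ W := by
      have : f₀ ∈ (fun g => fun μ : FreeSp M base =>
          (μ : ↥(LipO M base) →L[ℝ] ℝ) g) ⁻¹' W := by rw [hpre]; exact hf₀V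
      exact this
    obtain ⟨I, uu, huu, hpi⟩ := isOpen_pi_iff.mp hWopen _ hf₀W
    have hr : ∀ a : ↥(FreeSp M base), ∃ ρ : ℝ, 0 < ρ ∧ (a ∈ I →
        Metric.ball ((a : ↥(LipO M base) →L[ℝ] ℝ) f₀) ρ ⊆ uu a) := by
      intro a
      by_cases ha : a ∈ I
      · obtain ⟨hopen, hmem⟩ := huu a ha
        obtain ⟨ρ, hρ0, hball⟩ := Metric.isOpen_iff.mp hopen _ hmem
        exact ⟨ρ, hρ0, fun _ => hball⟩
      · exact ⟨1, one_pos, fun h => absurd h ha⟩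
    choose r hr0 hrball using hr
    set δ : ℝ := if hI : I.Nonempty then I.inf' hI r else 1 with hδdef
    have hδ0 : 0 < δ := by
      rw [hδdef]
      split_ifs with hI
      · exact (Finset.lt_inf'_iff _).mpr (fun a _ => hr0 a)
      · exact one_pos
    have hδle : ∀ a ∈ I, δ ≤ r a := by
      intro a ha
      rw [hδdef, dif_pos ⟨a, ha⟩]
      exact Finset.inf'_le _ ha
    have hcc : ∀ a : ↥(FreeSp M base), ∃ cf : M →₀ ℝ,
        dist ((a : ↥(LipO M base) →L[ℝ] ℝ))
          (cf.sum fun x t => t • deltaF base x) < δ / 8 :=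
      fun a => approx_delta base _ a.2 (δ / 8) (by positivity)
    choose cc hccd using hcc
    set N' : Finset M := insert base (I.biUnion fun a => (cc a).support) with hN'
    have hbaseN' : base ∈ N' := Finset.mem_insert_self _ _
    set K : ℝ := ∑ a ∈ I, ∑ x ∈ (cc a).support, |cc a x| * dist x base with hK
    have hK0 : 0 ≤ K := by
      refine Finset.sum_nonneg (fun a _ => Finset.sum_nonneg (fun x _ => ?_))
      exact mul_nonneg (abs_nonneg _) dist_nonneg
    set ε' : ℝ := min (min (δ / (2 * (K + 1))) (c / 4)) (1 / 2) with hε'def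
    have hε'pos : 0 < ε' :=
      lt_min (lt_min (by positivity) (by linarith)) (by norm_num)
    have hε'K : ε' ≤ δ / (2 * (K + 1)) := le_trans (min_le_left _ _) (min_le_left _ _)
    have hε'c : ε' ≤ c / 4 := le_trans (min_le_left _ _) (min_le_right _ _)
    have hε'le1 : ε' ≤ 1 := le_trans (min_le_right _ _) (by norm_num)
    obtain ⟨g₁, g₂, hg₁n, hg₂n, hg₁val, hg₂val, hgdist⟩ :=
      build_pair base hLTP N' hbaseN' h₀ h₀0 hLip0 ε' hε'pos hε'le1
    have hKsum : ∀ a ∈ I, ε' * ∑ x ∈ (cc a).support, |cc a x| * dist x base ≤ δ / 2 := by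
      intro a ha
      have hsum_le_K : ∑ x ∈ (cc a).support, |cc a x| * dist x base ≤ K := by
        rw [hK]
        refine Finset.single_le_sum (f := fun a => ∑ x ∈ (cc a).support,
          |cc a x| * dist x base) (fun b _ => ?_) ha
        exact Finset.sum_nonneg (fun x _ => mul_nonneg (abs_nonneg _) dist_nonneg)
      calc ε' * ∑ x ∈ (cc a).support, |cc a x| * dist x base ≤ ε' * K :=
            mul_le_mul_of_nonneg_left hsum_le_K (le_of_lt hε'pos)
        _ ≤ δ / (2 * (K + 1)) * K := mul_le_mul_of_nonneg_right hε'K hK0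
        _ ≤ δ / 2 := by
            rw [div_mul_eq_mul_div, div_le_div_iff₀ (by positivity) (by norm_num)]
            nlinarith
    have hmemU : ∀ g : ↥(LipO M base), ‖g‖ ≤ 1 →
        (∀ x ∈ N', deltaF base x g = (1 - ε') * h₀ x) → g ∈ U := by
      intro g hgn hgval
      rw [hUeq]
      refine ⟨?_, hgn⟩
      rw [← hpre]
      show (fun μ : FreeSp M base => (μ : ↥(LipO M base) →L[ℝ] ℝ) g) ∈ W
      refine hpi ?_
      rw [Set.mem_pi]
      intro a ha
      refine hrball a ha ?_
      rw [Metric.mem_ball]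
      refine lt_of_lt_of_le ?_ (hδle a ha)
      refine est base h₀ h₀0 hLip0 f₀ g hδf₀ hf₀B hgn ε' δ hε'pos hδ0 (cc a)
        (fun x hx => hgval x (Finset.mem_insert_of_mem (Finset.mem_biUnion.mpr ⟨a, ha, hx⟩)))
        (hKsum a ha) _ (by
          have := hccd a
          rwa [dist_eq_norm] at this)
    have hg₁U : g₁ ∈ U := hmemU g₁ hg₁n hg₁val
    have hg₂U : g₂ ∈ U := hmemU g₂ hg₂n hg₂val
    calc 2 - c ≤ 2 * (1 - ε') := by linarith
      _ ≤ dist g₁ g₂ := hgdist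
      _ ≤ Metric.diam U := Metric.dist_le_diam_of_mem hbdd hg₁U hg₂U
  by_contra hne
  have hlt : Metric.diam U < 2 := lt_of_le_of_ne hdle hne
  have := hge ((2 - Metric.diam U) / 2) (by linarith)
  linarith

end Stmt11Aux

namespace Stmt11Aux

variable {M : Type*} [MetricSpace M]

lemma not_d2p_of_no_pair (base : M) (hsub : ∀ u v : M, u = v) :
    ¬ WstarD2P M base := by
  intro hD2P
  have hIE : IsEmpty (Mt M) := ⟨fun p => p.2 (hsub p.1.1 p.1.2)⟩
  have hss : ∀ g g' : ↥(LipO M base), g = g' := by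
    intro g g'
    apply Subtype.ext
    apply Subtype.ext
    funext p
    exact hIE.elim p
  have h2 : Metric.diam {g : ↥(LipO M base) | ‖g‖ ≤ 1} = 2 := by
    refine hD2P _ ⟨0, by simp⟩ ⟨Set.univ, ?_, (Set.univ_inter _).symm⟩
    exact @isOpen_univ _ (wstar M base)
  have h0 : Metric.diam {g : ↥(LipO M base) | ‖g‖ ≤ 1} = 0 :=
    Metric.diam_subsingleton (fun g _ g' _ => hss g g')
  rw [h0] at h2
  norm_num at h2

lemma d2p_to_ltp (base : M) (hD2P : WstarD2P M base) : LipLTP M base := by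
  classical
  by_contra hnot
  unfold LipLTP at hnot
  push_neg at hnot
  obtain ⟨N, ε, hε, f, hf0, hflip, hfail⟩ := hnot
  -- hfail : ∀ u v, u ≠ v → ∃ x ∈ N, ∃ y ∈ N, dist x u + dist y v < (1-ε)*(...)
  have hfdist : ∀ a b : M, |f a - f b| ≤ dist a b := by
    intro a b
    have := hflip.dist_le_mul a b
    rwa [Real.dist_eq, NNReal.coe_one, one_mul] at this
  -- there must exist two distinct points
  by_cases hpair : ∃ u v : M, u ≠ v
  swap
  · push_neg at hpair
    exact not_d2p_of_no_pair base hpair hD2P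
  obtain ⟨u₀, v₀, hu₀v₀⟩ := hpair
  -- witnesses are distinct points of N
  have hwit_ne : ∀ u v : M, u ≠ v → ∀ x y : M,
      dist x u + dist y v < (1 - ε) * (|f x - f y| + dist u v) → x ≠ y := by
    intro u v huv x y hw hxy
    subst hxy
    rw [sub_self, abs_zero, zero_add] at hw
    have h1 : dist u v ≤ dist u x + dist x v := dist_triangle u x v
    have h2 : (1 - ε) * dist u v ≤ dist u v := by
      nlinarith [dist_nonneg (x := u) (y := v)]
    rw [dist_comm x u] at hw
    linarith
  have hε1 : ε < 1 := by
    by_contra hge1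
    push_neg at hge1
    obtain ⟨x, hx, y, hy, hw⟩ := hfail u₀ v₀ hu₀v₀
    have h1 : (1 - ε) * (|f x - f y| + dist u₀ v₀) ≤ 0 := by
      have : (0:ℝ) ≤ |f x - f y| + dist u₀ v₀ := by positivity
      nlinarith
    have h2 : (0:ℝ) ≤ dist x u₀ + dist y v₀ := by positivity
    linarith
  -- N contains two distinct points
  obtain ⟨x₀, hx₀, y₀, hy₀, hw₀⟩ := hfail u₀ v₀ hu₀v₀
  have hx₀y₀ : x₀ ≠ y₀ := hwit_ne u₀ v₀ hu₀v₀ x₀ y₀ hw₀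
  have hoffne : ((N.offDiag).image fun q => dist q.1 q.2).Nonempty :=
    ⟨dist x₀ y₀, Finset.mem_image.mpr ⟨(x₀, y₀),
      Finset.mem_offDiag.mpr ⟨hx₀, hy₀, hx₀y₀⟩, rfl⟩⟩
  set m₀ : ℝ := ((N.offDiag).image fun q => dist q.1 q.2).min' hoffne with hm₀
  have hm₀pos : 0 < m₀ := by
    have hmem := Finset.min'_mem _ hoffne
    rw [← hm₀] at hmem
    obtain ⟨q, hq, hqe⟩ := Finset.mem_image.mp hmem
    obtain ⟨_, _, hqne⟩ := Finset.mem_offDiag.mp hq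
    rw [← hqe]
    exact dist_pos.2 hqne
  have hm₀le : ∀ x ∈ N, ∀ y ∈ N, x ≠ y → m₀ ≤ dist x y := by
    intro x hx y hy hxy
    refine Finset.min'_le _ _ ?_
    exact Finset.mem_image.mpr ⟨(x, y), Finset.mem_offDiag.mpr ⟨hx, hy, hxy⟩, rfl⟩
  set ε₁ : ℝ := ε / 2 with hε₁
  set η : ℝ := ε ^ 2 * m₀ / 16 with hη
  have hηpos : 0 < η := by rw [hη]; positivity
  -- the weak-star open set
  have hddmem : ∀ x : M, deltaF base x ∈ FreeSp M base := fun x =>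
    subset_closure (Submodule.subset_span (Set.mem_range_self x))
  set dd : M → ↥(FreeSp M base) := fun x => ⟨deltaF base x, hddmem x⟩ with hdd
  set O : Set (↥(FreeSp M base) → ℝ) :=
    ⋂ x ∈ N, {φ : ↥(FreeSp M base) → ℝ | φ (dd x) ∈ Metric.ball ((1 - ε₁) * f x) η}
    with hO
  have hOopen : IsOpen O := by
    rw [hO]
    refine isOpen_biInter_finset (fun x _ => ?_)
    exact (Metric.isOpen_ball).preimage (continuous_apply (dd x))
  set Ψ : ↥(LipO M base) → (↥(FreeSp M base) → ℝ) :=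
    fun g => fun μ : FreeSp M base => (μ : ↥(LipO M base) →L[ℝ] ℝ) g with hΨ
  set V : Set ↥(LipO M base) := Ψ ⁻¹' O with hV
  have hVopen : @IsOpen _ (wstar M base) V := by
    unfold wstar
    exact isOpen_induced hOopen
  have hmemV : ∀ g : ↥(LipO M base),
      (g ∈ V ↔ ∀ x ∈ N, |deltaF base x g - (1 - ε₁) * f x| < η) := by
    intro g
    rw [hV]
    constructor
    · intro hg x hx
      have := Set.mem_iInter₂.mp hg x hx
      rwa [Set.mem_setOf_eq, Metric.mem_ball, Real.dist_eq] at this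
    · intro hcl
      refine Set.mem_iInter₂.mpr (fun x hx => ?_)
      rw [Set.mem_setOf_eq, Metric.mem_ball, Real.dist_eq]
      exact hcl x hx
  -- the base element of the open set
  have hf0' : (fun t => (1 - ε₁) * f t) base = 0 := by
    simp only [hf0, mul_zero]
  have hflip' : ∀ a b : M, |(fun t => (1 - ε₁) * f t) a - (fun t => (1 - ε₁) * f t) b|
      ≤ 1 * dist a b := by
    intro a b
    simp only
    rw [← mul_sub, abs_mul, one_mul]
    have h1 : |1 - ε₁| ≤ 1 := by
      rw [abs_le]; constructor <;> [linarith; linarith]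
    calc |1 - ε₁| * |f a - f b| ≤ 1 * |f a - f b| :=
          mul_le_mul_of_nonneg_right h1 (abs_nonneg _)
      _ = |f a - f b| := one_mul _
      _ ≤ dist a b := hfdist a b
  set gf : ↥(LipO M base) := toLipO base _ hf0' 1 hflip' with hgf
  have hgfU : gf ∈ V ∩ {g : ↥(LipO M base) | ‖g‖ ≤ 1} := by
    constructor
    · rw [hmemV]
      intro x hx
      rw [hgf, deltaF_toLipO]
      simpa using hηpos
    · exact norm_toLipO_le base _ hf0' 1 zero_le_one hflip'
  -- apply the D2P to get diameter 2
  have hdiam : Metric.diam (V ∩ {g : ↥(LipO M base) | ‖g‖ ≤ 1}) = 2 :=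
    hD2P _ ⟨gf, hgfU⟩ ⟨V, hVopen, rfl⟩
  -- but the diameter is small
  have hdle : Metric.diam (V ∩ {g : ↥(LipO M base) | ‖g‖ ≤ 1}) ≤ 2 - 3 / 4 * ε := by
    refine Metric.diam_le_of_forall_dist_le (by nlinarith) ?_
    intro g hg g' hg'
    obtain ⟨hgV, hgB⟩ := hg
    obtain ⟨hg'V, hg'B⟩ := hg'
    obtain ⟨hgr, hgr0, hgrrep⟩ := rep_spec base g
    obtain ⟨hg'r, hg'r0, hg'rrep⟩ := rep_spec base g'
    have hgl : ∀ a b : M, |hgr a - hgr b| ≤ dist a b := by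
      intro a b
      refine (rep_lip base g hgr hgrrep a b).trans ?_
      calc ‖g‖ * dist a b ≤ 1 * dist a b := mul_le_mul_of_nonneg_right hgB dist_nonneg
        _ = dist a b := one_mul _
    have hg'l : ∀ a b : M, |hg'r a - hg'r b| ≤ dist a b := by
      intro a b
      refine (rep_lip base g' hg'r hg'rrep a b).trans ?_
      calc ‖g'‖ * dist a b ≤ 1 * dist a b := mul_le_mul_of_nonneg_right hg'B dist_nonneg
        _ = dist a b := one_mul _
    have hgcl : ∀ x ∈ N, |hgr x - (1 - ε₁) * f x| < η := by
      intro x hx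
      have := (hmemV g).mp hgV x hx
      rwa [deltaF_eq base g hgr hgr0 hgrrep] at this
    have hg'cl : ∀ x ∈ N, |hg'r x - (1 - ε₁) * f x| < η := by
      intro x hx
      have := (hmemV g').mp hg'V x hx
      rwa [deltaF_eq base g' hg'r hg'r0 hg'rrep] at this
    -- key pointwise slope bound
    have hkey : ∀ u v : M, u ≠ v →
        (hgr u - hgr v) - (hg'r u - hg'r v) ≤ (2 - 3 / 4 * ε) * dist u v := by
      intro u v huv
      obtain ⟨x, hx, y, hy, hw⟩ := hfail u v huv
      have hxy : x ≠ y := hwit_ne u v huv x y hw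
      have hduv : (0:ℝ) < dist u v := dist_pos.2 huv
      have hm₀xy : m₀ ≤ dist x y := hm₀le x hx y hy hxy
      have habs : |f x - f y| ≤ dist x y := hfdist x y
      -- ε * dist x y < 2 * dist u v
      have hsep : ε * dist x y < 2 * dist u v := by
        have h1 : dist x y ≤ dist x u + dist u v + dist v y := by
          calc dist x y ≤ dist x v + dist v y := dist_triangle x v y
            _ ≤ (dist x u + dist u v) + dist v y :=
              add_le_add_left (dist_triangle x u v) _
        rw [dist_comm v y] at h1
        nlinarith [dist_nonneg (x := x) (y := u), dist_nonneg (x := y) (y := v)]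
      have hduvm : ε * m₀ / 2 < dist u v := by nlinarith
      have h2η : 2 * η < ε / 4 * dist u v := by
        rw [hη]
        nlinarith
      -- per-function slope bounds
      have hgA : hgr u - hgr v ≤ dist u v := by
        have := hgl u v
        rw [abs_le] at this
        linarith [this.2]
      have hg'A : -(dist u v) ≤ hg'r u - hg'r v := by
        have := hg'l u v
        rw [abs_le] at this
        linarith [this.1]
      have hgux : hgr u - hgr x ≤ dist x u := by
        have := hgl u x
        rw [abs_le, dist_comm u x] at this
        linarith [this.2]
      have hgyv : hgr y - hgr v ≤ dist y v := by
        have := hgl y v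
        rw [abs_le] at this
        linarith [this.2]
      have hg'vy : hg'r v - hg'r y ≤ dist y v := by
        have := hg'l v y
        rw [abs_le, dist_comm v y] at this
        linarith [this.2]
      have hg'xu : hg'r x - hg'r u ≤ dist x u := by
        have := hg'l x u
        rw [abs_le] at this
        linarith [this.2]
      have hgx := hgcl x hx
      have hgy := hgcl y hy
      have hg'x := hg'cl x hx
      have hg'y := hg'cl y hy
      rw [abs_lt] at hgx hgy hg'x hg'y
      rcases le_or_gt (f x - f y) 0 with ht | ht
      · -- f x ≤ f y : bound the slope of g
        have habs' : |f x - f y| = -(f x - f y) := abs_of_nonpos ht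
        have hgs : hgr u - hgr v < (1 - ε) * dist u v + 2 * η := by
          have hxy2 : hgr x - hgr y ≤ (1 - ε₁) * (f x - f y) + 2 * η := by
            have h1 := hgx.2
            have h2 := hgy.1
            have : (1 - ε₁) * f x - (1 - ε₁) * f y = (1 - ε₁) * (f x - f y) := by ring
            linarith
          have hchain : hgr u - hgr v =
              (hgr u - hgr x) + (hgr x - hgr y) + (hgr y - hgr v) := by ring
          have hεε₁ : (1 - ε) * (-(f x - f y)) + (1 - ε₁) * (f x - f y) ≤ 0 := by
            rw [hε₁]
            nlinarith
          rw [habs'] at hw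
          linarith
        nlinarith
      · -- f x > f y : bound the slope of g' reversed
        have habs' : |f x - f y| = f x - f y := abs_of_pos (by linarith)
        have hg's : hg'r v - hg'r u < (1 - ε) * dist u v + 2 * η := by
          have hxy2 : hg'r y - hg'r x ≤ -((1 - ε₁) * (f x - f y)) + 2 * η := by
            have h1 := hg'y.2
            have h2 := hg'x.1
            have : (1 - ε₁) * f y - (1 - ε₁) * f x = -((1 - ε₁) * (f x - f y)) := by ring
            linarith
          have hchain : hg'r v - hg'r u =
              (hg'r v - hg'r y) + (hg'r y - hg'r x) + (hg'r x - hg'r u) := by ring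
          have hεε₁ : (1 - ε) * (f x - f y) + -((1 - ε₁) * (f x - f y)) ≤ 0 := by
            rw [hε₁]
            nlinarith
          rw [habs'] at hw
          linarith
        nlinarith
    -- convert to a norm bound
    have hcoordb : ∀ p : Mt M, |coord base (g - g') p| ≤ 2 - 3 / 4 * ε := by
      intro p
      have hco : coord base (g - g') p =
          ((hgr p.1.1 - hgr p.1.2) - (hg'r p.1.1 - hg'r p.1.2)) / dist p.1.1 p.1.2 := by
        rw [coord_sub, hgrrep p, hg'rrep p, div_sub_div_same]
      have hd : (0:ℝ) < dist p.1.1 p.1.2 := dist_pos.2 p.2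
      rw [hco, abs_div, abs_of_pos hd, div_le_iff₀ hd]
      rw [abs_le]
      constructor
      · have h1 := hkey p.1.2 p.1.1 (Ne.symm p.2)
        rw [dist_comm p.1.2 p.1.1] at h1
        linarith
      · exact hkey p.1.1 p.1.2 p.2
    calc dist g g' = ‖g - g'‖ := dist_eq_norm g g'
      _ ≤ 2 - 3 / 4 * ε := norm_le_of_coord base (g - g') _ (by nlinarith) hcoordb
  rw [hdiam] at hdle
  nlinarith

end Stmt11Aux

theorem stmt11 (base : M) : WstarD2P M base ↔ LipLTP M base := by
  exact ⟨Stmt11Aux.d2p_to_ltp base, Stmt11Aux.ltp_to_d2p base⟩
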